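/- arXiv:2303.02918 — 2 statements merged into one kernel-verified Lean document; each statement's English description precedes it below -/
import Mathlib

section
/- Let G be a finite simple undirected graph on n vertices with adjacency matrix A, and let r = (r_1, …, r_n) be a random vector whose coordinates are independent Rademacher random variables. Then E[ (A r)ᵀ A (A r) ] / 6 = c3(G), the number of triangles of G; i.e., the TraceTriangle estimator T = ((A r)ᵀ A (A r))/6 is an unbiased estimator of the triangle count. -/
open Matrix MeasureTheory ProbabilityTheory

/-- The Rademacher distribution on `ℝ`: `+1` with probability `1/2` and `-1`
with probability `1/2`. -/
noncomputable def rademacherMeasure : Measure ℝ :=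
  (1 / 2 : ENNReal) • Measure.dirac (1 : ℝ) + (1 / 2 : ENNReal) • Measure.dirac (-1 : ℝ)


lemma integrable_smul_dirac' (f : ℝ → ℝ) (a : ℝ) :
    Integrable f ((1/2 : ENNReal) • Measure.dirac a) :=
  ((integrable_const (f a)).congr (ae_eq_dirac f).symm).smul_measure (by norm_num)

lemma integral_rademacher (f : ℝ → ℝ) :
    ∫ x, f x ∂rademacherMeasure = (f 1 + f (-1)) / 2 := by
  rw [rademacherMeasure, integral_add_measure (integrable_smul_dirac' f 1)
      (integrable_smul_dirac' f (-1)), integral_smul_measure, integral_smul_measure,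
    integral_dirac, integral_dirac]
  simp [ENNReal.toReal_inv]
  ring

lemma rademacher_abs_one : ∀ᵐ x ∂rademacherMeasure, |x| = 1 := by
  rw [ae_iff]
  have h : MeasurableSet {x : ℝ | ¬|x| = 1} :=
    ((measurableSet_eq_fun (by fun_prop) measurable_const)).compl
  rw [rademacherMeasure]
  simp only [Measure.add_apply, Measure.smul_apply, Measure.dirac_apply' _ h]
  norm_num [Set.indicator_apply]

section comb
variable {V : Type*} [Fintype V] [DecidableEq V] (G : SimpleGraph V) [DecidableRel G.Adj]

lemma card_triples' :
    ((Finset.univ : Finset ((V × V) × V)).filter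
      (fun p => G.Adj p.1.1 p.1.2 ∧ G.Adj p.1.2 p.2 ∧ G.Adj p.2 p.1.1)).card
      = 6 * (G.cliqueFinset 3).card := by
  rw [Finset.card_eq_sum_card_fiberwise
      (f := fun p : (V × V) × V => ({p.1.1, p.1.2, p.2} : Finset V)) (t := G.cliqueFinset 3)
      (by
        rintro ⟨⟨x, y⟩, z⟩ hp
        simp only [Finset.mem_coe, Finset.mem_filter] at hp ⊢
        obtain ⟨-, hxy, hyz, hzx⟩ := hp
        rw [SimpleGraph.mem_cliqueFinset_iff, SimpleGraph.is3Clique_triple_iff]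
        exact ⟨hxy, hzx.symm, hyz⟩)]
  rw [Finset.sum_congr rfl (fun t ht => ?_), Finset.sum_const, smul_eq_mul, mul_comm]
  rw [SimpleGraph.mem_cliqueFinset_iff, SimpleGraph.is3Clique_iff] at ht
  obtain ⟨a, b, c, hab, hac, hbc, rfl⟩ := ht
  have hab' := hab.ne
  have hac' := hac.ne
  have hbc' := hbc.ne
  have : (Finset.univ.filter
      (fun p : (V × V) × V => G.Adj p.1.1 p.1.2 ∧ G.Adj p.1.2 p.2 ∧ G.Adj p.2 p.1.1)).filter
      (fun p => ({p.1.1, p.1.2, p.2} : Finset V) = {a, b, c})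
      = {((a,b),c), ((a,c),b), ((b,a),c), ((b,c),a), ((c,a),b), ((c,b),a)} := by
    ext ⟨⟨x, y⟩, z⟩
    simp only [Finset.mem_filter, Finset.mem_univ, true_and, Finset.mem_insert,
      Finset.mem_singleton, Prod.mk.injEq]
    constructor
    · rintro ⟨⟨hxy, hyz, hzx⟩, hset⟩
      have hx : x ∈ ({a, b, c} : Finset V) := by rw [← hset]; simp
      have hy : y ∈ ({a, b, c} : Finset V) := by rw [← hset]; simp
      have hz : z ∈ ({a, b, c} : Finset V) := by rw [← hset]; simp
      simp only [Finset.mem_insert, Finset.mem_singleton] at hx hy hz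
      have h1 := hxy.ne
      have h2 := hyz.ne
      have h3 := hzx.ne
      rcases hx with rfl | rfl | rfl <;> rcases hy with rfl | rfl | rfl <;>
        rcases hz with rfl | rfl | rfl <;> simp_all
    · rintro (⟨⟨rfl, rfl⟩, rfl⟩ | ⟨⟨rfl, rfl⟩, rfl⟩ | ⟨⟨rfl, rfl⟩, rfl⟩ | ⟨⟨rfl, rfl⟩, rfl⟩ |
        ⟨⟨rfl, rfl⟩, rfl⟩ | ⟨⟨rfl, rfl⟩, rfl⟩) <;>
        refine ⟨⟨?_, ?_, ?_⟩, ?_⟩ <;>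
        first
          | exact hab | exact hab.symm | exact hac | exact hac.symm
          | exact hbc | exact hbc.symm
          | (ext s; simp; try tauto)
  rw [this]
  rw [Finset.card_insert_of_notMem (by simp [Prod.ext_iff]; tauto),
    Finset.card_insert_of_notMem (by simp [Prod.ext_iff]; tauto),
    Finset.card_insert_of_notMem (by simp [Prod.ext_iff]; tauto),
    Finset.card_insert_of_notMem (by simp [Prod.ext_iff]; tauto),
    Finset.card_insert_of_notMem (by simp [Prod.ext_iff]; tauto),
    Finset.card_singleton]

lemma sum_cube' :
    (∑ i, ∑ j, ∑ k, G.adjMatrix ℝ i j * (G.adjMatrix ℝ j k * G.adjMatrix ℝ k i))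
      = 6 * ((G.cliqueFinset 3).card : ℝ) := by
  have : ∀ i j k : V, G.adjMatrix ℝ i j * (G.adjMatrix ℝ j k * G.adjMatrix ℝ k i)
      = if G.Adj i j ∧ G.Adj j k ∧ G.Adj k i then (1:ℝ) else 0 := by
    intro i j k
    simp only [SimpleGraph.adjMatrix_apply]
    by_cases h1 : G.Adj i j <;> by_cases h2 : G.Adj j k <;> by_cases h3 : G.Adj k i <;>
      simp [h1, h2, h3]
  simp only [this]
  rw [← Finset.sum_product']
  simp only [← Finset.sum_product']
  rw [Finset.sum_boole]
  rw [Finset.univ_product_univ, Finset.univ_product_univ, card_triples']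
  push_cast; ring

end comb

/-- **The TraceTriangle estimator is an unbiased estimator of the triangle count.**
Let `G` be a finite simple undirected graph with adjacency matrix `A`, and let
`r` be a random vector with independent Rademacher coordinates.  Then
`E[(A r)ᵀ A (A r)] / 6 = c3 G`, the number of triangles of `G`. -/
theorem traceTriangle_unbiased
    {V : Type*} [Fintype V] [DecidableEq V]
    (G : SimpleGraph V) [DecidableRel G.Adj]
    {Ω : Type*} [MeasurableSpace Ω] (μ : Measure Ω) [IsProbabilityMeasure μ]
    (r : Ω → V → ℝ)
    (hmeas : ∀ i, Measurable fun ω => r ω i)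
    (hindep : iIndepFun (fun i ω => r ω i) μ)
    (hdist : ∀ i, μ.map (fun ω => r ω i) = rademacherMeasure) :
    (∫ ω, ((G.adjMatrix ℝ).mulVec (r ω)) ⬝ᵥ
        (G.adjMatrix ℝ).mulVec ((G.adjMatrix ℝ).mulVec (r ω)) ∂μ) / 6
      = ((G.cliqueFinset 3).card : ℝ) := by
  set A := G.adjMatrix ℝ with hA
  set B := A * (A * A) with hB
  -- pointwise rewrite
  have hpt : ∀ x : V → ℝ, A.mulVec x ⬝ᵥ A.mulVec (A.mulVec x)
      = ∑ i, ∑ j, B i j * (x i * x j) := by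
    intro x
    have hAT : Aᵀ = A := by rw [hA, SimpleGraph.transpose_adjMatrix]
    rw [Matrix.dotProduct_mulVec, Matrix.vecMul_mulVec, Matrix.dotProduct_mulVec,
      Matrix.vecMul_vecMul, hAT, mul_assoc, ← hB]
    have expand : (x ᵥ* B) ⬝ᵥ x = ∑ j, ∑ i, x i * B i j * x j := by
      simp [dotProduct, Matrix.vecMul, Finset.sum_mul]
    rw [expand, Finset.sum_comm]
    exact Finset.sum_congr rfl fun i _ => Finset.sum_congr rfl fun j _ => by ring
  -- a.e. bounds
  have haeone : ∀ i, ∀ᵐ ω ∂μ, |r ω i| = 1 := by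
    intro i
    have := rademacher_abs_one
    rw [← hdist i, ae_map_iff (hmeas i).aemeasurable
      (measurableSet_eq_fun (by fun_prop) measurable_const)] at this
    exact this
  have hint : ∀ i j, Integrable (fun ω => r ω i * r ω j) μ := by
    intro i j
    refine Integrable.mono' (integrable_const 1)
      (((hmeas i).mul (hmeas j)).aestronglyMeasurable) ?_
    filter_upwards [haeone i, haeone j] with ω h1 h2
    rw [Real.norm_eq_abs, abs_mul, h1, h2, mul_one]
  have hint1 : ∀ i, Integrable (fun ω => r ω i) μ := by
    intro i
    refine Integrable.mono' (integrable_const 1) (hmeas i).aestronglyMeasurable ?_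
    filter_upwards [haeone i] with ω h1
    rw [Real.norm_eq_abs, h1]
  -- first moments
  have hE1 : ∀ i, ∫ ω, r ω i ∂μ = 0 := by
    intro i
    have : ∫ ω, r ω i ∂μ = ∫ x, x ∂(μ.map (fun ω => r ω i)) :=
      (integral_map (hmeas i).aemeasurable measurable_id.aestronglyMeasurable).symm
    rw [this, hdist i, integral_rademacher (fun x => x)]
    norm_num
  -- second moments
  have hE : ∀ i j, ∫ ω, r ω i * r ω j ∂μ = if i = j then (1:ℝ) else 0 := by
    intro i j
    by_cases h : i = j
    · subst h
      rw [if_pos rfl]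
      have : ∫ ω, r ω i * r ω i ∂μ = ∫ x, x * x ∂(μ.map (fun ω => r ω i)) :=
        (integral_map (hmeas i).aemeasurable
          (measurable_id.mul measurable_id).aestronglyMeasurable).symm
      rw [this, hdist i, integral_rademacher (fun x => x * x)]
      norm_num
    · rw [if_neg h]
      have hIndep : IndepFun (fun ω => r ω i) (fun ω => r ω j) μ := hindep.indepFun h
      have h2 := IndepFun.integral_mul_eq_mul_integral hIndep (hint1 i).1 (hint1 j).1
      have h3 : ∫ ω, r ω i * r ω j ∂μ
          = MeasureTheory.integral μ ((fun ω => r ω i) * fun ω => r ω j) := rfl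
      rw [h3, h2, hE1 i, hE1 j, mul_zero]
  -- compute the integral
  have hmain : (∫ ω, A.mulVec (r ω) ⬝ᵥ A.mulVec (A.mulVec (r ω)) ∂μ)
      = 6 * ((G.cliqueFinset 3).card : ℝ) := by
    calc (∫ ω, A.mulVec (r ω) ⬝ᵥ A.mulVec (A.mulVec (r ω)) ∂μ)
        = ∫ ω, ∑ i, ∑ j, B i j * (r ω i * r ω j) ∂μ := by
          exact integral_congr_ae (Filter.Eventually.of_forall fun ω => hpt (r ω))
      _ = ∑ i, ∑ j, B i j * ∫ ω, r ω i * r ω j ∂μ := by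
          refine (integral_finset_sum _ (fun i _ =>
            integrable_finset_sum _ (fun j _ => (hint i j).const_mul _))).trans ?_
          refine Finset.sum_congr rfl fun i _ => ?_
          refine (integral_finset_sum _ (fun j _ => (hint i j).const_mul _)).trans ?_
          exact Finset.sum_congr rfl fun j _ => integral_const_mul _ _
      _ = ∑ i, B i i := by
          simp only [hE, mul_ite, mul_one, mul_zero]
          exact Finset.sum_congr rfl fun i _ => by
            rw [Finset.sum_ite_eq Finset.univ i (B i ·)]; simp
      _ = 6 * ((G.cliqueFinset 3).card : ℝ) := by
          rw [← sum_cube' G]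
          refine Finset.sum_congr rfl fun i _ => ?_
          rw [hB, Matrix.mul_apply]
          refine Finset.sum_congr rfl fun j _ => ?_
          rw [Matrix.mul_apply, Finset.mul_sum]
  rw [hmain]
  ring
end

section
/- Let S be a real symmetric n×n matrix with a simple dominant eigenvalue: there is an eigenvalue λ_1 ≠ 0 of multiplicity one such that |λ_1| > |λ| for every other eigenvalue λ of S. Let v_1 be a unit eigenvector for λ_1, and let r ∈ ℝ^n satisfy ⟨r, v_1⟩ ≠ 0. Then S^p r ≠ 0 for every p ≥ 0, and there exist signs s_p ∈ {−1, +1} such that s_p · S^p r / ‖S^p r‖ → v_1 as p → ∞; that is, the power-iteration iterates converge to the dominant eigenvector up to sign. -/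
open Matrix Filter
open scoped RealInnerProductSpace

/-- The Euclidean norm of a vector in `ℝⁿ` (presented as `Fin n → ℝ`). -/
noncomputable def euclNorm {n : ℕ} (x : Fin n → ℝ) : ℝ := Real.sqrt (x ⬝ᵥ x)

/-- The identity map into `EuclideanSpace`. -/
def toE {n : ℕ} (x : Fin n → ℝ) : EuclideanSpace ℝ (Fin n) := WithLp.toLp 2 x

lemma inner_toE {n : ℕ} (x y : Fin n → ℝ) : ⟪toE x, toE y⟫ = x ⬝ᵥ y := by
  simp [toE, PiLp.inner_apply, RCLike.inner_apply, dotProduct, mul_comm]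

lemma euclNorm_toE {n : ℕ} (x : Fin n → ℝ) : euclNorm x = ‖toE x‖ := by
  rw [euclNorm, ← inner_toE, real_inner_self_eq_norm_sq, Real.sqrt_sq (norm_nonneg _)]

lemma symm_dot {n : ℕ} (A : Matrix (Fin n) (Fin n) ℝ) (hA : A.IsSymm)
    (x y : Fin n → ℝ) : (A *ᵥ x) ⬝ᵥ y = x ⬝ᵥ (A *ᵥ y) := by
  calc (A *ᵥ x) ⬝ᵥ y = (x ᵥ* Aᵀ) ⬝ᵥ y := by rw [vecMul_transpose]
    _ = (x ᵥ* A) ⬝ᵥ y := by rw [show Aᵀ = A from hA]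
    _ = x ⬝ᵥ (A *ᵥ y) := (dotProduct_mulVec x A y).symm

lemma toE_add {n : ℕ} (x y : Fin n → ℝ) : toE (x + y) = toE x + toE y := rfl

lemma toE_smul {n : ℕ} (t : ℝ) (x : Fin n → ℝ) : toE (t • x) = t • toE x := rfl

lemma toE_coe {n : ℕ} (z : EuclideanSpace ℝ (Fin n)) : toE ⇑z = z := rfl

lemma toE_sum {n : ℕ} (s : Finset (Fin n)) (f : Fin n → (Fin n → ℝ)) :
    toE (∑ i ∈ s, f i) = ∑ i ∈ s, toE (f i) := by
  classical
  induction s using Finset.induction_on with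
  | empty => simp [toE]
  | insert _ _ hnotmem ih =>
    rw [Finset.sum_insert hnotmem, Finset.sum_insert hnotmem, toE_add, ih]

lemma euclNorm_smul {n : ℕ} (t : ℝ) (x : Fin n → ℝ) :
    euclNorm (t • x) = |t| * euclNorm x := by
  rw [euclNorm_toE, euclNorm_toE, toE_smul, norm_smul, Real.norm_eq_abs]

/-- **Convergence of power iteration for a symmetric matrix with a simple
dominant eigenvalue.**
Let `S` be a real symmetric `n × n` matrix with a simple dominant eigenvalue
`λ₁ ≠ 0` (its eigenspace is one-dimensional and `|λ₁| > |λ|` for every other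
eigenvalue `λ`), let `v₁` be a unit eigenvector for `λ₁`, and let `r ∈ ℝⁿ`
satisfy `⟨r, v₁⟩ ≠ 0`.  Then `S^p r ≠ 0` for every `p`, and there are signs
`s p ∈ {−1, +1}` such that `s p • S^p r / ‖S^p r‖ → v₁` as `p → ∞`. -/
theorem power_iteration_converges
    {n : ℕ} (S : Matrix (Fin n) (Fin n) ℝ) (hS : S.IsSymm)
    (lam1 : ℝ) (hlam1 : lam1 ≠ 0)
    (hsimple : Module.finrank ℝ (Module.End.eigenspace S.mulVecLin lam1) = 1)
    (hdom : ∀ lam : ℝ, Module.End.HasEigenvalue S.mulVecLin lam →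
      lam ≠ lam1 → |lam| < |lam1|)
    (v1 : Fin n → ℝ) (hv1 : S.mulVec v1 = lam1 • v1) (hv1unit : euclNorm v1 = 1)
    (r : Fin n → ℝ) (hr : r ⬝ᵥ v1 ≠ 0) :
    (∀ p : ℕ, (S ^ p).mulVec r ≠ 0) ∧
    ∃ s : ℕ → ℝ, (∀ p, s p = 1 ∨ s p = -1) ∧
      Tendsto (fun p : ℕ =>
          s p • ((euclNorm ((S ^ p).mulVec r))⁻¹ • (S ^ p).mulVec r))
        atTop (nhds v1) := by
  classical
  have hA : S.IsHermitian := by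
    rw [Matrix.IsHermitian, conjTranspose_eq_transpose_of_trivial]; exact hS
  set b := hA.eigenvectorBasis with hb
  set μ := hA.eigenvalues with hmu
  -- eigenvector powers
  have hbS : ∀ i : Fin n, S *ᵥ ⇑(b i) = μ i • ⇑(b i) := hA.mulVec_eigenvectorBasis
  have hbSp : ∀ (i : Fin n) (p : ℕ), (S ^ p) *ᵥ ⇑(b i) = (μ i) ^ p • ⇑(b i) := by
    intro i p
    induction p with
    | zero => simp
    | succ p ih =>
      rw [pow_succ', ← mulVec_mulVec, ih, mulVec_smul, hbS, smul_smul, mul_comm, ← pow_succ']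
  have hv1p : ∀ p : ℕ, (S ^ p) *ᵥ v1 = lam1 ^ p • v1 := by
    intro p
    induction p with
    | zero => simp
    | succ p ih =>
      rw [pow_succ', ← mulVec_mulVec, ih, mulVec_smul, hv1, smul_smul, mul_comm, ← pow_succ']
  -- dominance
  have hstrict : ∀ i, μ i ≠ lam1 → |μ i| < |lam1| := by
    intro i h
    refine hdom (μ i) ?_ h
    refine Module.End.hasEigenvalue_of_hasEigenvector
      (x := ⇑(b i)) ⟨Module.End.mem_eigenspace_iff.2 ?_, ?_⟩
    · simpa [mulVecLin_apply] using hbS i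
    · exact fun h0 => b.orthonormal.ne_zero i (by ext j; exact congrFun h0 j)
  -- orthogonality of other eigenvectors with v1
  have hbv : ∀ i, μ i ≠ lam1 → ⇑(b i) ⬝ᵥ v1 = 0 := by
    intro i h
    have h1 : μ i * (⇑(b i) ⬝ᵥ v1) = lam1 * (⇑(b i) ⬝ᵥ v1) := by
      calc μ i * (⇑(b i) ⬝ᵥ v1) = (μ i • ⇑(b i)) ⬝ᵥ v1 := by
              rw [smul_dotProduct]; rfl
        _ = (S *ᵥ ⇑(b i)) ⬝ᵥ v1 := by rw [hbS]
        _ = ⇑(b i) ⬝ᵥ (S *ᵥ v1) := symm_dot S hS _ _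
        _ = ⇑(b i) ⬝ᵥ (lam1 • v1) := by rw [hv1]
        _ = lam1 * (⇑(b i) ⬝ᵥ v1) := by rw [dotProduct_smul]; rfl
    have h2 : (μ i - lam1) * (⇑(b i) ⬝ᵥ v1) = 0 := by rw [sub_mul, h1, sub_self]
    exact (mul_eq_zero.1 h2).resolve_left (sub_ne_zero.2 h)
  have hv1ne : v1 ≠ 0 := by
    intro h
    rw [h] at hv1unit
    simp [euclNorm] at hv1unit
  have hv1d : v1 ⬝ᵥ v1 = 1 := Real.sqrt_eq_one.1 hv1unit
  -- the eigenspace is the span of v1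
  have hv1mem : v1 ∈ Module.End.eigenspace S.mulVecLin lam1 :=
    Module.End.mem_eigenspace_iff.2 (by simpa [mulVecLin_apply] using hv1)
  have hspan : Module.End.eigenspace S.mulVecLin lam1 = Submodule.span ℝ {v1} := by
    refine (Submodule.eq_of_le_of_finrank_eq ?_ ?_).symm
    · rwa [Submodule.span_le, Set.singleton_subset_iff]
    · rw [finrank_span_singleton hv1ne, hsimple]
  -- coordinates
  set c : Fin n → ℝ := fun i => ⇑(b i) ⬝ᵥ r with hc
  set a : ℝ := r ⬝ᵥ v1 with ha
  have hsumdot : ∀ (s : Finset (Fin n)) (f : Fin n → (Fin n → ℝ)) (w : Fin n → ℝ),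
      (∑ i ∈ s, f i) ⬝ᵥ w = ∑ i ∈ s, f i ⬝ᵥ w := by
    intro s f w
    simp only [dotProduct, Finset.sum_apply, Finset.sum_mul]
    exact Finset.sum_comm
  -- expansion of r in the eigenbasis
  have hrexp : r = ∑ i, c i • ⇑(b i) := by
    have h := (b.sum_repr' (toE r)).symm
    have hco : ∀ i, (inner ℝ (b i) (toE r) : ℝ) = c i := fun i => inner_toE _ r
    simp_rw [hco] at h
    have h' := congrArg WithLp.ofLp h
    simpa [toE] using h'
  -- the lam1-part of r is a • v1
  have hTpart : ∑ i ∈ Finset.univ.filter (fun i => μ i = lam1), c i • ⇑(b i) = a • v1 := by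
    have hwmem : (∑ i ∈ Finset.univ.filter (fun i => μ i = lam1), c i • ⇑(b i))
        ∈ Submodule.span ℝ {v1} := by
      rw [← hspan]
      refine Submodule.sum_mem _ fun i hi => Submodule.smul_mem _ _ ?_
      rw [Finset.mem_filter] at hi
      exact Module.End.mem_eigenspace_iff.2
        (by rw [mulVecLin_apply, hbS i, hi.2])
    obtain ⟨t, ht⟩ := Submodule.mem_span_singleton.1 hwmem
    have hwv : (∑ i ∈ Finset.univ.filter (fun i => μ i = lam1), c i • ⇑(b i)) ⬝ᵥ v1 = a := by
      have h1 : (∑ i ∈ Finset.univ.filter (fun i => μ i = lam1), c i • ⇑(b i)) ⬝ᵥ v1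
          = ∑ i ∈ Finset.univ.filter (fun i => μ i = lam1), c i * (⇑(b i) ⬝ᵥ v1) := by
        rw [hsumdot]
        exact Finset.sum_congr rfl fun i _ => by rw [smul_dotProduct, smul_eq_mul]
      have h2 : a = ∑ i, c i * (⇑(b i) ⬝ᵥ v1) := by
        conv_lhs => rw [ha, hrexp]
        rw [hsumdot]
        exact Finset.sum_congr rfl fun i _ => by rw [smul_dotProduct, smul_eq_mul]
      rw [h1, h2]
      exact Finset.sum_filter_of_ne fun i _ hne => by
        by_contra h
        exact hne (by rw [hbv i h, mul_zero])
    have ht2 : t = a := by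
      have h3 := congrArg (fun z => z ⬝ᵥ v1) ht
      simpa [smul_dotProduct, smul_eq_mul, hv1d, hwv] using h3
    rw [← ht, ht2]
  have hrsplit : r = a • v1 + ∑ i ∈ Finset.univ.filter (fun i => ¬ μ i = lam1), c i • ⇑(b i) := by
    conv_lhs => rw [hrexp,
      ← Finset.sum_filter_add_sum_filter_not Finset.univ (fun i => μ i = lam1)
        (fun i => c i • ⇑(b i))]
    rw [hTpart]
  have hmvsum : ∀ (p : ℕ) (s : Finset (Fin n)) (f : Fin n → (Fin n → ℝ)),
      (S ^ p) *ᵥ (∑ i ∈ s, f i) = ∑ i ∈ s, (S ^ p) *ᵥ f i := by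
    intro p s f
    have h := map_sum ((S ^ p).mulVecLin) f s
    simp only [mulVecLin_apply] at h
    exact h
  have hdecomp : ∀ p : ℕ, (S ^ p) *ᵥ r
      = (lam1 ^ p * a) • v1
        + ∑ i ∈ Finset.univ.filter (fun i => ¬ μ i = lam1), (μ i ^ p * c i) • ⇑(b i) := by
    intro p
    conv_lhs => rw [hrsplit]
    rw [mulVec_add, mulVec_smul, hv1p p, hmvsum, smul_smul, mul_comm a (lam1 ^ p)]
    congr 1
    exact Finset.sum_congr rfl fun i _ => by
      rw [mulVec_smul, hbSp i p, smul_smul, mul_comm (c i) (μ i ^ p)]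
  -- part 1 : the iterates never vanish
  have hdot : ∀ p : ℕ, ((S ^ p) *ᵥ r) ⬝ᵥ v1 = lam1 ^ p * a := by
    intro p
    rw [symm_dot _ (hS.pow p), hv1p p, dotProduct_smul, smul_eq_mul, ha]
  have hane : a ≠ 0 := hr
  have hne : ∀ p : ℕ, (S ^ p) *ᵥ r ≠ 0 := by
    intro p h
    have h0 := hdot p
    rw [h, zero_dotProduct] at h0
    exact mul_ne_zero (pow_ne_zero p hlam1) hane h0.symm
  refine ⟨hne, ?_⟩
  -- the normalized iterates
  set y : ℕ → (Fin n → ℝ) := fun p => (lam1 ^ p)⁻¹ • ((S ^ p) *ᵥ r) with hy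
  have hy2 : ∀ p : ℕ, y p = a • v1 + ∑ i ∈ Finset.univ.filter (fun i => ¬ μ i = lam1),
      ((μ i / lam1) ^ p * c i) • ⇑(b i) := by
    intro p
    simp only [hy]
    rw [hdecomp p, smul_add, smul_smul, Finset.smul_sum]
    congr 1
    · rw [← mul_assoc, inv_mul_cancel₀ (pow_ne_zero p hlam1), one_mul]
    · refine Finset.sum_congr rfl fun i _ => ?_
      rw [smul_smul]
      congr 1
      rw [div_pow]
      field_simp
  have hyE : ∀ p : ℕ, toE (y p)
      = toE (a • v1) + ∑ i ∈ Finset.univ.filter (fun i => ¬ μ i = lam1),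
          ((μ i / lam1) ^ p * c i) • b i := by
    intro p
    rw [hy2 p, toE_add, toE_sum]
    congr 1
  -- convergence of the scaled iterates
  have hlim : Tendsto (fun p => toE (y p)) atTop (nhds (toE (a • v1))) := by
    have hzero : Tendsto (fun p => ∑ i ∈ Finset.univ.filter (fun i => ¬ μ i = lam1),
        ((μ i / lam1) ^ p * c i) • (b i)) atTop
        (nhds (∑ i ∈ Finset.univ.filter (fun i => ¬ μ i = lam1), (0 : EuclideanSpace ℝ (Fin n)))) := by
      refine tendsto_finset_sum _ fun i hi => ?_
      rw [Finset.mem_filter] at hi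
      have habs : |μ i / lam1| < 1 := by
        rw [abs_div]
        exact (div_lt_one (abs_pos.2 hlam1)).2 (hstrict i hi.2)
      have h1 := ((tendsto_pow_atTop_nhds_zero_of_abs_lt_one habs).mul_const (c i)).smul_const
        (b i : EuclideanSpace ℝ (Fin n))
      simpa using h1
    simp only [Finset.sum_const_zero] at hzero
    have h2 := (tendsto_const_nhds :
      Tendsto (fun _ : ℕ => toE (a • v1)) atTop (nhds (toE (a • v1)))).add hzero
    rw [add_zero] at h2
    exact h2.congr fun p => (hyE p).symm
  -- norms
  have hnv1 : ‖toE v1‖ = 1 := by rw [← euclNorm_toE, hv1unit]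
  have hLnorm : ‖toE (a • v1)‖ = |a| := by
    rw [toE_smul, norm_smul, hnv1, mul_one, Real.norm_eq_abs]
  have hLne : ‖toE (a • v1)‖ ≠ 0 := by rw [hLnorm]; exact abs_ne_zero.2 hane
  have hnlim : Tendsto (fun p => (‖toE (y p)‖)⁻¹ • toE (y p)) atTop
      (nhds ((|a|)⁻¹ • toE (a • v1))) := by
    have h1 := (hlim.norm.inv₀ hLne).smul hlim
    rwa [hLnorm] at h1
  -- signs
  set σa : ℝ := if 0 < a then 1 else -1 with hsa
  set σl : ℝ := if 0 < lam1 then 1 else -1 with hsl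
  have hσa : σa * a = |a| := by
    rw [hsa]
    by_cases h : 0 < a
    · simp [h, abs_of_pos h]
    · have h' : a < 0 := lt_of_le_of_ne (not_lt.1 h) hane
      simp [h, abs_of_neg h']
  have hσl : σl * lam1 = |lam1| := by
    rw [hsl]
    by_cases h : 0 < lam1
    · simp [h, abs_of_pos h]
    · have h' : lam1 < 0 := lt_of_le_of_ne (not_lt.1 h) hlam1
      simp [h, abs_of_neg h']
  have hσa2 : σa • ((|a|)⁻¹ • toE (a • v1)) = toE v1 := by
    rw [toE_smul, smul_smul, smul_smul]
    have h1 : σa * (|a|)⁻¹ * a = (σa * a) * (|a|)⁻¹ := by ring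
    rw [h1, hσa, mul_inv_cancel₀ (abs_ne_zero.2 hane), one_smul]
  have hfinE : Tendsto (fun p => σa • ((‖toE (y p)‖)⁻¹ • toE (y p))) atTop (nhds (toE v1)) := by
    have h1 := hnlim.const_smul σa
    rwa [hσa2] at h1
  refine ⟨fun p => σa * σl ^ p, fun p => ?_, ?_⟩
  · have h1 : σa = 1 ∨ σa = -1 := by rw [hsa]; split <;> simp
    have h2 : σl ^ p = 1 ∨ σl ^ p = -1 := by
      rw [hsl]; split
      · left; exact one_pow p
      · exact neg_one_pow_eq_or ℝ p
    show σa * σl ^ p = 1 ∨ σa * σl ^ p = -1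
    rcases h1 with h1 | h1 <;> rcases h2 with h2 | h2 <;> rw [h1, h2] <;> norm_num
  · have hφ := ((PiLp.continuousLinearEquiv 2 ℝ
      (fun _ : Fin n => ℝ)).continuous.tendsto (toE v1)).comp hfinE
    have hid : (PiLp.continuousLinearEquiv 2 ℝ (fun _ : Fin n => ℝ)) (toE v1) = v1 := rfl
    rw [hid] at hφ
    refine hφ.congr fun p => ?_
    show σa • ((‖toE (y p)‖)⁻¹ • (y p)) =
      (σa * σl ^ p) • ((euclNorm ((S ^ p) *ᵥ r))⁻¹ • ((S ^ p) *ᵥ r))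
    have hu : euclNorm (y p) = |lam1 ^ p|⁻¹ * euclNorm ((S ^ p) *ᵥ r) := by
      simp only [hy]
      rw [euclNorm_smul, abs_inv]
    rw [← euclNorm_toE, hu]
    simp only [hy]
    simp only [smul_smul]
    congr 1
    have hme : σl ^ p * lam1 ^ p = |lam1 ^ p| := by rw [← mul_pow, hσl, ← abs_pow]
    have hlp : (lam1 : ℝ) ^ p ≠ 0 := pow_ne_zero p hlam1
    have halp : |lam1 ^ p| ≠ 0 := abs_ne_zero.2 hlp
    have hsl0 : σl ≠ 0 := by rw [hsl]; split <;> norm_num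
    have he0 : euclNorm ((S ^ p) *ᵥ r) ≠ 0 := by
      intro h
      apply hne p
      have h2 : ‖toE ((S ^ p) *ᵥ r)‖ = 0 := by rw [← euclNorm_toE, h]
      have h3 : toE ((S ^ p) *ᵥ r) = 0 := norm_eq_zero.1 h2
      exact congrArg WithLp.ofLp h3
    rw [← hme]
    field_simp
end
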